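/- For every constant C₀ > 1 there exist c > 0 and K ∈ ℕ (depending on β, δ, m, C₀) such that for all k, n ∈ ℤ with k ≠ n, C₀⁻¹|n| ≤ |k| ≤ C₀|n| and |k| ≥ K, and all τ ∈ ℝ, one has max{ ⟨(τ - λ_k)/⟨k⟩^δ⟩ , ⟨(τ - λ_n)/⟨n⟩^δ⟩ } ≥ c · (max{⟨k⟩, ⟨n⟩})^{2m - δ}. -/

import Mathlib

set_option maxHeartbeats 1000000

open Filter Real

/-- The Japanese bracket `⟨x⟩ = (1 + |x|²)^{1/2}`. -/
noncomputable def jbr (x : ℝ) : ℝ := Real.sqrt (1 + x ^ 2)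

lemma one_le_jbr (x : ℝ) : 1 ≤ jbr x := by
  have h := Real.sq_sqrt (show (0:ℝ) ≤ 1 + x ^ 2 by positivity)
  have h2 := Real.sqrt_nonneg (1 + x ^ 2)
  unfold jbr
  nlinarith [sq_nonneg x]

lemma abs_le_jbr (x : ℝ) : |x| ≤ jbr x := by
  rw [← Real.sqrt_sq_eq_abs]
  exact Real.sqrt_le_sqrt (by nlinarith)

lemma jbr_le (x : ℝ) (hx : 1 ≤ |x|) : jbr x ≤ Real.sqrt 2 * |x| := by
  rw [← Real.sqrt_sq_eq_abs, ← Real.sqrt_mul (by norm_num)]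
  apply Real.sqrt_le_sqrt
  nlinarith [abs_nonneg x, sq_abs x]

noncomputable def hfun (α β μ m r : ℝ) (x : ℝ) : ℝ :=
  -β * x * |x| ^ (2 * m) + α * x * |x| ^ (2 * r) - 2 * μ * x

lemma hfun_neg (α β μ m r x : ℝ) : hfun α β μ m r (-x) = - hfun α β μ m r x := by
  unfold hfun; rw [abs_neg]; ring

lemma rpow_diff_le (p q x y : ℝ) (hy : 0 < y) (hxy : y ≤ x) (hqp : q ≤ p) :
    x ^ q - y ^ q ≤ y ^ (q - p) * (x ^ p - y ^ p) := by
  have hx : 0 < x := lt_of_lt_of_le hy hxy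
  have h1 : y ^ (p - q) * (x ^ q - y ^ q) ≤ x ^ p - y ^ p := by
    have h2 : y ^ (p - q) * x ^ q ≤ x ^ (p - q) * x ^ q :=
      mul_le_mul_of_nonneg_right (Real.rpow_le_rpow hy.le hxy (by linarith))
        (Real.rpow_nonneg hx.le q)
    have h3 : x ^ (p - q) * x ^ q = x ^ p := by
      rw [← Real.rpow_add hx]; ring_nf
    have h4 : y ^ (p - q) * y ^ q = y ^ p := by
      rw [← Real.rpow_add hy]; ring_nf
    linarith [h2, h3, h4]
  have h6 : y ^ (q - p) * y ^ (p - q) = 1 := by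
    rw [← Real.rpow_add hy, show q - p + (p - q) = 0 by ring, Real.rpow_zero]
  calc x ^ q - y ^ q = y ^ (q - p) * (y ^ (p - q) * (x ^ q - y ^ q)) := by
        rw [← mul_assoc, h6, one_mul]
    _ ≤ y ^ (q - p) * (x ^ p - y ^ p) :=
        mul_le_mul_of_nonneg_left h1 (Real.rpow_pos_of_pos hy _).le

/-- Key gap estimate: for `|x|,|y|` large and `|x-y| ≥ 1`,
`|h x - h y| ≥ (β/2) max(|x|,|y|)^{2m}`. -/
lemma key_gap (α β μ m r : ℝ) (hα : 0 < α) (hβ : 0 < β) (hr : 0 < r) (hrm : r < m) :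
    ∃ K₀ : ℝ, 1 ≤ K₀ ∧ ∀ x y : ℝ, K₀ ≤ |x| → K₀ ≤ |y| → 1 ≤ |x - y| →
      β / 2 * (max |x| |y|) ^ (2 * m) ≤ |hfun α β μ m r x - hfun α β μ m r y| := by
  -- smallness threshold
  have hsm1 : ∀ᶠ y in atTop, α * y ^ (-(2 * m - 2 * r)) ≤ β / 4 := by
    have t : Tendsto (fun y : ℝ => α * y ^ (-(2 * m - 2 * r))) atTop (nhds (α * 0)) :=
      (tendsto_rpow_neg_atTop (by linarith)).const_mul α
    rw [mul_zero] at t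
    exact t.eventually (eventually_le_nhds (by positivity))
  have hsm2 : ∀ᶠ y in atTop, 2 * |μ| * y ^ (-(2 * m)) ≤ β / 4 := by
    have t : Tendsto (fun y : ℝ => 2 * |μ| * y ^ (-(2 * m))) atTop (nhds (2 * |μ| * 0)) :=
      (tendsto_rpow_neg_atTop (by linarith)).const_mul (2 * |μ|)
    rw [mul_zero] at t
    exact t.eventually (eventually_le_nhds (by positivity))
  obtain ⟨K₁, hK₁⟩ := (hsm1.and hsm2).exists_forall_of_atTop
  refine ⟨max K₁ 1, le_max_right _ _, ?_⟩
  set K₀ := max K₁ 1 with hK₀def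
  have hK₀1 : (1:ℝ) ≤ K₀ := le_max_right _ _
  have hsmall : ∀ y : ℝ, K₀ ≤ y → α * y ^ (-(2 * m - 2 * r)) ≤ β / 4 ∧
      2 * |μ| * y ^ (-(2 * m)) ≤ β / 4 := fun y hy => hK₁ y (le_trans (le_max_left _ _) hy)
  -- Lemma A : same-sign gap
  have lemA : ∀ x y : ℝ, K₀ ≤ y → y + 1 ≤ x →
      β / 2 * x ^ (2 * m) ≤ hfun α β μ m r y - hfun α β μ m r x := by
    intro x y hy hyx
    have hy0 : 0 < y := lt_of_lt_of_le (by norm_num) (le_trans hK₀1 hy)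
    have hx0 : 0 < x := by linarith
    have hxy : y ≤ x := by linarith
    obtain ⟨hs1, hs2⟩ := hsmall y hy
    have hax : |x| = x := abs_of_pos hx0
    have hay : |y| = y := abs_of_pos hy0
    have hxP : x * x ^ (2 * m) = x ^ (2 * m + 1) := by
      rw [Real.rpow_add_one hx0.ne']; ring
    have hyP : y * y ^ (2 * m) = y ^ (2 * m + 1) := by
      rw [Real.rpow_add_one hy0.ne']; ring
    have hxQ : x * x ^ (2 * r) = x ^ (2 * r + 1) := by
      rw [Real.rpow_add_one hx0.ne']; ring
    have hyQ : y * y ^ (2 * r) = y ^ (2 * r + 1) := by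
      rw [Real.rpow_add_one hy0.ne']; ring
    have hE : x ^ (2 * r + 1) - y ^ (2 * r + 1) ≤
        y ^ (-(2 * m - 2 * r)) * (x ^ (2 * m + 1) - y ^ (2 * m + 1)) := by
      have := rpow_diff_le (2 * m + 1) (2 * r + 1) x y hy0 hxy (by linarith)
      rwa [show 2 * r + 1 - (2 * m + 1) = -(2 * m - 2 * r) by ring] at this
    have hF : x - y ≤ y ^ (-(2 * m)) * (x ^ (2 * m + 1) - y ^ (2 * m + 1)) := by
      have := rpow_diff_le (2 * m + 1) 1 x y hy0 hxy (by linarith)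
      rwa [show (1:ℝ) - (2 * m + 1) = -(2 * m) by ring, Real.rpow_one, Real.rpow_one] at this
    have hD0 : 0 ≤ x ^ (2 * m + 1) - y ^ (2 * m + 1) := by
      have := Real.rpow_le_rpow hy0.le hxy (by linarith : (0:ℝ) ≤ 2 * m + 1)
      linarith
    have hDx : x ^ (2 * m) * (x - y) ≤ x ^ (2 * m + 1) - y ^ (2 * m + 1) := by
      have h1 : y ^ (2 * m) ≤ x ^ (2 * m) := Real.rpow_le_rpow hy0.le hxy (by linarith)
      have h2 : y ^ (2 * m + 1) = y ^ (2 * m) * y := Real.rpow_add_one hy0.ne' _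
      have h3 : x ^ (2 * m + 1) = x ^ (2 * m) * x := Real.rpow_add_one hx0.ne' _
      have h5 : y ^ (2 * m) * y ≤ x ^ (2 * m) * y := mul_le_mul_of_nonneg_right h1 hy0.le
      nlinarith [h2, h3, h5]
    have hxm0 : 0 < x ^ (2 * m) := Real.rpow_pos_of_pos hx0 _
    have hmu : -(2 * |μ|) * (x - y) ≤ 2 * μ * (x - y) := by
      have h5 : 0 ≤ μ + |μ| := by linarith [neg_abs_le μ]
      nlinarith [mul_nonneg h5 (show (0:ℝ) ≤ x - y by linarith)]
    have haE : α * (x ^ (2 * r + 1) - y ^ (2 * r + 1)) ≤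
        β / 4 * (x ^ (2 * m + 1) - y ^ (2 * m + 1)) := by
      refine le_trans (mul_le_mul_of_nonneg_left hE hα.le) ?_
      rw [← mul_assoc]
      exact mul_le_mul_of_nonneg_right hs1 hD0
    have haF : 2 * |μ| * (x - y) ≤ β / 4 * (x ^ (2 * m + 1) - y ^ (2 * m + 1)) := by
      refine le_trans (mul_le_mul_of_nonneg_left hF (by positivity)) ?_
      rw [← mul_assoc]
      exact mul_le_mul_of_nonneg_right hs2 hD0
    have expand : hfun α β μ m r y - hfun α β μ m r x =
        β * (x ^ (2 * m + 1) - y ^ (2 * m + 1)) - α * (x ^ (2 * r + 1) - y ^ (2 * r + 1))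
          + 2 * μ * (x - y) := by
      unfold hfun
      rw [hax, hay]
      rw [← hxP, ← hyP, ← hxQ, ← hyQ]
      ring
    rw [expand]
    have hD1 : x ^ (2 * m) ≤ x ^ (2 * m + 1) - y ^ (2 * m + 1) := by
      refine le_trans ?_ hDx
      nlinarith [hxm0, hyx]
    have s1 : β / 2 * x ^ (2 * m) ≤ β / 2 * (x ^ (2 * m + 1) - y ^ (2 * m + 1)) :=
      mul_le_mul_of_nonneg_left hD1 (by positivity)
    linarith [s1, haE, haF, hmu]
  -- Lemma B : single-point size
  have lemB : ∀ x : ℝ, K₀ ≤ x → β / 2 * x ^ (2 * m + 1) ≤ -(hfun α β μ m r x) := by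
    intro x hx
    have hx0 : 0 < x := lt_of_lt_of_le (by norm_num) (le_trans hK₀1 hx)
    obtain ⟨hs1, hs2⟩ := hsmall x hx
    have hax : |x| = x := abs_of_pos hx0
    have hxP : x * x ^ (2 * m) = x ^ (2 * m + 1) := by
      rw [Real.rpow_add_one hx0.ne']; ring
    have hxQ : x * x ^ (2 * r) = x ^ (2 * r + 1) := by
      rw [Real.rpow_add_one hx0.ne']; ring
    have hQP : x ^ (2 * r + 1) = x ^ (-(2 * m - 2 * r)) * x ^ (2 * m + 1) := by
      rw [← Real.rpow_add hx0]; ring_nf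
    have hFP : x = x ^ (-(2 * m)) * x ^ (2 * m + 1) := by
      rw [← Real.rpow_add hx0, show -(2 * m) + (2 * m + 1) = 1 by ring, Real.rpow_one]
    have hP0 : 0 < x ^ (2 * m + 1) := Real.rpow_pos_of_pos hx0 _
    have haQ : α * x ^ (2 * r + 1) ≤ β / 4 * x ^ (2 * m + 1) := by
      rw [hQP, ← mul_assoc]
      exact mul_le_mul_of_nonneg_right hs1 hP0.le
    have haF : 2 * |μ| * x ≤ β / 4 * x ^ (2 * m + 1) := by
      calc 2 * |μ| * x = 2 * |μ| * (x ^ (-(2 * m)) * x ^ (2 * m + 1)) := by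
            rw [← hFP]
        _ = 2 * |μ| * x ^ (-(2 * m)) * x ^ (2 * m + 1) := by ring
        _ ≤ β / 4 * x ^ (2 * m + 1) := mul_le_mul_of_nonneg_right hs2 hP0.le
    have hmu : -(2 * |μ| * x) ≤ 2 * μ * x := by
      have h5 : 0 ≤ μ + |μ| := by linarith [neg_abs_le μ]
      nlinarith [mul_nonneg h5 hx0.le]
    have expand : -(hfun α β μ m r x) =
        β * x ^ (2 * m + 1) - α * x ^ (2 * r + 1) + 2 * μ * x := by
      unfold hfun; rw [hax, ← hxP, ← hxQ]; ring
    rw [expand]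
    linarith [haQ, haF, hmu]
  -- main case analysis, first for positive x
  have main : ∀ x y : ℝ, 0 < x → K₀ ≤ |x| → K₀ ≤ |y| → 1 ≤ |x - y| →
      β / 2 * (max |x| |y|) ^ (2 * m) ≤ |hfun α β μ m r x - hfun α β μ m r y| := by
    intro x y hx0 hkx hky hxy1
    have hax : |x| = x := abs_of_pos hx0
    rw [hax] at hkx
    have hy0 : y ≠ 0 := by
      intro h; rw [h, abs_zero] at hky; linarith
    rcases lt_or_gt_of_ne hy0 with hyneg | hypos
    · -- y < 0 : opposite signs
      have hay : |y| = -y := abs_of_neg hyneg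
      rw [hay] at hky
      have hBx := lemB x hkx
      have hBy := lemB (-y) hky
      have hodd : hfun α β μ m r y = -(hfun α β μ m r (-y)) := by
        rw [hfun_neg]; ring_nf
      have hsum : β / 2 * (x ^ (2 * m + 1) + (-y) ^ (2 * m + 1)) ≤
          -(hfun α β μ m r x - hfun α β μ m r y) := by
        rw [hodd]; linarith [hBx, hBy]
      have hmax1 : (max |x| |y|) ^ (2 * m) ≤ (max |x| |y|) ^ (2 * m + 1) :=
        Real.rpow_le_rpow_of_exponent_le (by rw [hax]; exact le_trans hK₀1 (le_max_of_le_left hkx)) (by linarith)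
      have hmax2 : (max |x| |y|) ^ (2 * m + 1) ≤ x ^ (2 * m + 1) + (-y) ^ (2 * m + 1) := by
        rcases max_cases |x| |y| with ⟨h, _⟩ | ⟨h, _⟩
        · rw [h, hax]
          linarith [(Real.rpow_pos_of_pos (show (0:ℝ) < -y by linarith) (2 * m + 1)).le]
        · rw [h, hay]
          linarith [(Real.rpow_pos_of_pos hx0 (2 * m + 1)).le]
      have := abs_sub_comm (hfun α β μ m r x) (hfun α β μ m r y)
      have h7 : -(hfun α β μ m r x - hfun α β μ m r y) ≤ |hfun α β μ m r x - hfun α β μ m r y| :=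
        neg_le_abs _
      have s1 : β / 2 * (max |x| |y|) ^ (2 * m) ≤
          β / 2 * (x ^ (2 * m + 1) + (-y) ^ (2 * m + 1)) :=
        mul_le_mul_of_nonneg_left (hmax1.trans hmax2) (by positivity)
      linarith [s1, hsum, h7]
    · -- y > 0 : same sign
      have hay : |y| = y := abs_of_pos hypos
      rw [hay] at hky
      rcases lt_trichotomy x y with h | h | h
      · have hd : y - x ≥ 1 := by
          rw [abs_sub_comm, abs_of_pos (by linarith : (0:ℝ) < y - x)] at hxy1; linarith
        have := lemA y x hkx (by linarith)
        have hmax : max |x| |y| = y := by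
          rw [hax, hay]; exact max_eq_right (by linarith)
        rw [hmax]
        calc β / 2 * y ^ (2 * m) ≤ hfun α β μ m r x - hfun α β μ m r y := this
          _ ≤ |hfun α β μ m r x - hfun α β μ m r y| := le_abs_self _
      · exfalso; rw [h, sub_self, abs_zero] at hxy1; linarith
      · have hd : x - y ≥ 1 := by
          rw [abs_of_pos (by linarith : (0:ℝ) < x - y)] at hxy1; linarith
        have := lemA x y hky (by linarith)
        have hmax : max |x| |y| = x := by
          rw [hax, hay]; exact max_eq_left (by linarith)
        rw [hmax]
        calc β / 2 * x ^ (2 * m) ≤ hfun α β μ m r y - hfun α β μ m r x := this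
          _ ≤ |hfun α β μ m r x - hfun α β μ m r y| := by
              rw [abs_sub_comm]; exact le_abs_self _
  -- general case
  intro x y hkx hky hxy1
  rcases lt_trichotomy x 0 with hx | hx | hx
  · have := main (-x) (-y) (by linarith) (by rwa [abs_neg]) (by rwa [abs_neg])
      (by rw [show -x - -y = -(x - y) by ring, abs_neg]; exact hxy1)
    rw [hfun_neg, hfun_neg, abs_neg, abs_neg, show -(hfun α β μ m r x) - -(hfun α β μ m r y)
      = -(hfun α β μ m r x - hfun α β μ m r y) by ring, abs_neg] at this
    exact this
  · exfalso; rw [hx, abs_zero] at hkx; linarith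
  · exact main x y hx hkx hky hxy1

theorem modulation_max_lower_bound
    (α β μ m r δ : ℝ) (hα : 0 < α) (hβ : 0 < β) (hr : 0 < r) (hrm : r < m) (hδ : 0 < δ)
    (lam : ℤ → ℝ)
    (hlam : ∀ k : ℤ, lam k =
      -β * (k : ℝ) * |(k : ℝ)| ^ (2 * m) + α * (k : ℝ) * |(k : ℝ)| ^ (2 * r) - 2 * μ * (k : ℝ)) :
    ∀ C₀ : ℝ, 1 < C₀ → ∃ c > 0, ∃ K : ℕ, ∀ k n : ℤ, k ≠ n →
      C₀⁻¹ * |(n : ℝ)| ≤ |(k : ℝ)| → |(k : ℝ)| ≤ C₀ * |(n : ℝ)| → (K : ℤ) ≤ |k| →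
      ∀ τ : ℝ,
        c * max (jbr (k : ℝ)) (jbr (n : ℝ)) ^ (2 * m - δ) ≤
          max (jbr ((τ - lam k) / jbr (k : ℝ) ^ δ)) (jbr ((τ - lam n) / jbr (n : ℝ) ^ δ)) := by
  intro C₀ hC₀
  obtain ⟨K₀, hK₀1, hgap⟩ := key_gap α β μ m r hα hβ hr hrm
  refine ⟨β / (4 * (2:ℝ) ^ m), by positivity, ⌈C₀ * K₀⌉₊, ?_⟩
  intro k n hkn h1 h2 hK τ
  have hlamk : lam k = hfun α β μ m r (k : ℝ) := by rw [hlam k]; rfl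
  have hlamn : lam n = hfun α β μ m r (n : ℝ) := by rw [hlam n]; rfl
  -- size facts
  have hC₀0 : (0:ℝ) < C₀ := by linarith
  have hkceil : C₀ * K₀ ≤ |(k : ℝ)| := by
    have h3 : (⌈C₀ * K₀⌉₊ : ℝ) ≤ |(k : ℝ)| := by
      have h4 : ((⌈C₀ * K₀⌉₊ : ℤ) : ℝ) ≤ ((|k| : ℤ) : ℝ) := Int.cast_le.mpr hK
      push_cast at h4
      exact h4
    exact le_trans (Nat.le_ceil _) h3
  have hKk : K₀ ≤ |(k : ℝ)| := by nlinarith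
  have hKn : K₀ ≤ |(n : ℝ)| := by nlinarith
  have hk1 : (1:ℝ) ≤ |(k : ℝ)| := le_trans hK₀1 hKk
  have hn1 : (1:ℝ) ≤ |(n : ℝ)| := le_trans hK₀1 hKn
  have hdiff1 : (1:ℝ) ≤ |(k : ℝ) - (n : ℝ)| := by
    have : (1:ℤ) ≤ |k - n| := Int.one_le_abs (sub_ne_zero.mpr hkn)
    have h5 : ((1:ℤ) : ℝ) ≤ ((|k - n| : ℤ) : ℝ) := by exact_mod_cast this
    rwa [Int.cast_abs, Int.cast_sub, Int.cast_one] at h5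
  have hgapkn := hgap (k : ℝ) (n : ℝ) hKk hKn hdiff1
  rw [← hlamk, ← hlamn] at hgapkn
  -- notation
  set N : ℝ := max |(k : ℝ)| |(n : ℝ)| with hN
  set M : ℝ := max (jbr (k : ℝ)) (jbr (n : ℝ)) with hM
  have hM1 : (1:ℝ) ≤ M := le_trans (one_le_jbr _) (le_max_left _ _)
  have hM0 : (0:ℝ) < M := by linarith
  have hN1 : (1:ℝ) ≤ N := le_trans hk1 (le_max_left _ _)
  have hMN : M ≤ Real.sqrt 2 * N := by
    have hk' : jbr (k : ℝ) ≤ Real.sqrt 2 * N :=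
      le_trans (jbr_le _ hk1) (by
        have : (0:ℝ) ≤ Real.sqrt 2 := Real.sqrt_nonneg 2
        exact mul_le_mul_of_nonneg_left (le_max_left _ _) this)
    have hn' : jbr (n : ℝ) ≤ Real.sqrt 2 * N :=
      le_trans (jbr_le _ hn1) (by
        have : (0:ℝ) ≤ Real.sqrt 2 := Real.sqrt_nonneg 2
        exact mul_le_mul_of_nonneg_left (le_max_right _ _) this)
    exact max_le hk' hn'
  have hs2 : (0:ℝ) < Real.sqrt 2 := Real.sqrt_pos.mpr (by norm_num)
  have hMdivN : M / Real.sqrt 2 ≤ N := by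
    rw [div_le_iff₀ hs2]; linarith [mul_comm (Real.sqrt 2) N]
  -- denominators
  have hjk0 : (0:ℝ) < jbr (k : ℝ) ^ δ := Real.rpow_pos_of_pos (by linarith [one_le_jbr (k:ℝ)]) δ
  have hjn0 : (0:ℝ) < jbr (n : ℝ) ^ δ := Real.rpow_pos_of_pos (by linarith [one_le_jbr (n:ℝ)]) δ
  have hMd0 : (0:ℝ) < M ^ δ := Real.rpow_pos_of_pos hM0 δ
  have hjkM : jbr (k : ℝ) ^ δ ≤ M ^ δ :=
    Real.rpow_le_rpow (by linarith [one_le_jbr (k:ℝ)]) (le_max_left _ _) hδ.le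
  have hjnM : jbr (n : ℝ) ^ δ ≤ M ^ δ :=
    Real.rpow_le_rpow (by linarith [one_le_jbr (n:ℝ)]) (le_max_right _ _) hδ.le
  set A : ℝ := (τ - lam k) / jbr (k : ℝ) ^ δ with hA
  set B : ℝ := (τ - lam n) / jbr (n : ℝ) ^ δ with hB
  have hAabs : |τ - lam k| / M ^ δ ≤ |A| := by
    rw [hA, abs_div, abs_of_pos hjk0]
    exact div_le_div_of_nonneg_left (abs_nonneg _) hjk0 hjkM
  have hBabs : |τ - lam n| / M ^ δ ≤ |B| := by
    rw [hB, abs_div, abs_of_pos hjn0]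
    exact div_le_div_of_nonneg_left (abs_nonneg _) hjn0 hjnM
  have htr : |lam k - lam n| ≤ |τ - lam k| + |τ - lam n| := by
    calc |lam k - lam n| ≤ |lam k - τ| + |τ - lam n| := abs_sub_le _ _ _
      _ = |τ - lam k| + |τ - lam n| := by rw [abs_sub_comm]
  have e1 : Real.sqrt 2 ^ (2 * m) = (2:ℝ) ^ m := by
    rw [Real.rpow_mul (Real.sqrt_nonneg 2), Real.rpow_two,
      Real.sq_sqrt (by norm_num : (0:ℝ) ≤ 2)]
  have h2m0 : (0:ℝ) ≤ 2 * m := by linarith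
  have h2me : ((2:ℝ) ^ m) ≠ 0 := by positivity
  have hMde : (M ^ δ) ≠ 0 := hMd0.ne'
  have step0 : β / (4 * (2:ℝ) ^ m) * M ^ (2 * m - δ)
      = β / 2 * (M / Real.sqrt 2) ^ (2 * m) / (2 * M ^ δ) := by
    rw [Real.div_rpow (by linarith : (0:ℝ) ≤ M) (Real.sqrt_nonneg 2), e1,
      Real.rpow_sub hM0]
    field_simp
    ring
  calc β / (4 * (2:ℝ) ^ m) * M ^ (2 * m - δ)
      = β / 2 * (M / Real.sqrt 2) ^ (2 * m) / (2 * M ^ δ) := step0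
    _ ≤ β / 2 * N ^ (2 * m) / (2 * M ^ δ) := by
        gcongr
    _ ≤ |lam k - lam n| / (2 * M ^ δ) := by gcongr
    _ ≤ (|τ - lam k| + |τ - lam n|) / (2 * M ^ δ) := by
        exact (div_le_div_iff_of_pos_right (by positivity)).mpr htr
    _ = (|τ - lam k| / M ^ δ + |τ - lam n| / M ^ δ) / 2 := by
        rw [← add_div, div_div, mul_comm]
    _ ≤ (|A| + |B|) / 2 := by linarith [hAabs, hBabs]
    _ ≤ max |A| |B| := by
        linarith [le_max_left |A| |B|, le_max_right |A| |B|]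
    _ ≤ max (jbr A) (jbr B) := max_le_max (abs_le_jbr A) (abs_le_jbr B)
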